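/- arXiv:1401.5925 — 2 statements merged into one kernel-verified Lean document; each statement's English description precedes it below -/
import Mathlib

section
/- Let P ≥ 1, let x_i, x_j ∈ ℝ^P with x_i ≠ x_j, and let y_i, y_j ∈ ℝ^P. Define d(t) = ‖(x_i + t·y_i) − (x_j + t·y_j)‖, r = ‖x_i − x_j‖, ṙ = r⁻¹·⟨x_i − x_j, y_i − y_j⟩, and r̈ = r⁻¹·(‖y_i − y_j‖² − ṙ²). Then the third derivative of d at t = 0 equals −3·r⁻¹·ṙ·r̈. -/
/-- Appendix A (eq. rangeL3): third derivative of the time-varying distance between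
two nodes in linear motion, at `t = 0`, equals `-3 r⁻¹ ṙ r̈`. -/
theorem third_deriv_dist
    (P : ℕ) (hP : 1 ≤ P)
    (xi xj yi yj : EuclideanSpace ℝ (Fin P))
    (hxij : xi ≠ xj)
    (d : ℝ → ℝ) (hd : ∀ t, d t = ‖(xi + t • yi) - (xj + t • yj)‖)
    (r : ℝ) (hr : r = ‖xi - xj‖)
    (rdot : ℝ) (hrdot : rdot = r⁻¹ * (inner ℝ (xi - xj) (yi - yj) : ℝ))
    (rddot : ℝ) (hrddot : rddot = r⁻¹ * (‖yi - yj‖ ^ 2 - rdot ^ 2)) :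
    iteratedDeriv 3 d 0 = -3 * r⁻¹ * rdot * rddot := by
  have hrpos : 0 < r := by
    rw [hr]; exact norm_pos_iff.mpr (sub_ne_zero.mpr hxij)
  have hrne : r ≠ 0 := ne_of_gt hrpos
  set u := xi - xj with hu
  set v := yi - yj with hv
  set a := ‖u‖^2 with ha
  set b := (2 : ℝ) * inner ℝ u v with hb
  set c := ‖v‖^2 with hc
  have har : a = r^2 := by rw [ha, hr]
  have hbr : b = 2 * (r * rdot) := by
    rw [hb, hrdot]; field_simp
  have hcr : c - rdot^2 = r * rddot := by
    rw [hrddot]; field_simp [hc]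
  -- d as sqrt of a quadratic
  have hq : ∀ t : ℝ, d t = Real.sqrt (a + b*t + c*t^2) := by
    intro t
    have h1 : (xi + t • yi) - (xj + t • yj) = u + t • v := by
      rw [hu, hv, smul_sub]; abel
    have h2 : ‖u + t • v‖^2 = a + b*t + c*t^2 := by
      rw [ha, hb, hc, norm_add_sq_real, real_inner_smul_right, norm_smul,
        mul_pow, Real.norm_eq_abs, sq_abs]
      ring
    rw [hd, h1, ← Real.sqrt_sq (norm_nonneg (u + t • v)), h2]
  have hdfun : d = fun s => Real.sqrt (a + b*s + c*s^2) := funext hq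
  -- open set where quadratic positive
  set S := {t : ℝ | 0 < a + b*t + c*t^2} with hS
  have hSo : IsOpen S := isOpen_lt continuous_const (by fun_prop)
  have h0S : (0:ℝ) ∈ S := by
    simp only [hS, Set.mem_setOf_eq]
    nlinarith [har]
  have hSmem : S ∈ nhds (0:ℝ) := hSo.mem_nhds h0S
  -- derivative of quadratic
  have hqd : ∀ t : ℝ, HasDerivAt (fun s : ℝ => a + b*s + c*s^2) (b + 2*c*t) t := by
    intro t
    have h := (((hasDerivAt_id t).const_mul b).const_add a).add
      ((hasDerivAt_pow 2 t).const_mul c)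
    convert h using 1
    · rfl
    · rfl
    · rfl
    push_cast; ring
  set f1 : ℝ → ℝ := fun t => (b + 2*c*t) / (2 * Real.sqrt (a + b*t + c*t^2)) with hf1
  set f2 : ℝ → ℝ := fun t =>
    (4*c*(a + b*t + c*t^2) - (b + 2*c*t)^2) /
      (4 * (a + b*t + c*t^2) * Real.sqrt (a + b*t + c*t^2)) with hf2
  have hd1 : ∀ t ∈ S, HasDerivAt d (f1 t) t := by
    intro t ht
    rw [hdfun]
    exact (hqd t).sqrt (ne_of_gt ht)
  have hd2 : ∀ t ∈ S, HasDerivAt f1 (f2 t) t := by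
    intro t ht
    have hQpos : 0 < a + b*t + c*t^2 := ht
    set s := Real.sqrt (a + b*t + c*t^2) with hsq
    have hs2 : s^2 = a + b*t + c*t^2 := Real.sq_sqrt hQpos.le
    have hspos : 0 < s := Real.sqrt_pos.mpr hQpos
    have hsne : s ≠ 0 := ne_of_gt hspos
    have hn : HasDerivAt (fun x : ℝ => b + 2*c*x) (2*c) t := by
      have h := ((hasDerivAt_id t).const_mul (2*c)).const_add b
      simpa using h
    have hm : HasDerivAt (fun x : ℝ => 2 * Real.sqrt (a + b*x + c*x^2))
        (2 * ((b + 2*c*t) / (2 * s))) t :=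
      ((hqd t).sqrt (ne_of_gt hQpos)).const_mul 2
    have h := hn.div hm (by positivity)
    convert h using 1
    · rfl
    · rfl
    · rfl
    rw [hf2]
    simp only
    rw [← hs2]
    field_simp
    rw [Real.sqrt_sq hspos.le]
    ring
  have hQ0 : a + b*0 + c*0^2 = r^2 := by simp [har]
  have hs0 : Real.sqrt (a + b*0 + c*0^2) = r := by
    rw [hQ0, Real.sqrt_sq hrpos.le]
  -- third derivative value at 0
  have hd3 : HasDerivAt f2 (-3 * r⁻¹ * rdot * rddot) 0 := by
    have hN : HasDerivAt (fun t : ℝ => 4*c*(a + b*t + c*t^2) - (b + 2*c*t)^2)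
        (4*c*(b + 2*c*0) - 2 * (b + 2*c*0)^1 * (2*c)) 0 := by
      have hn1 : HasDerivAt (fun x : ℝ => b + 2*c*x) (2*c) 0 := by
        have h := ((hasDerivAt_id 0).const_mul (2*c)).const_add b
        simpa using h
      exact ((hqd 0).const_mul (4*c)).sub (hn1.pow 2)
    have hD : HasDerivAt (fun t : ℝ => 4 * (a + b*t + c*t^2) * Real.sqrt (a + b*t + c*t^2))
        (4 * (b + 2*c*0) * Real.sqrt (a + b*0 + c*0^2)
          + 4 * (a + b*0 + c*0^2) * ((b + 2*c*0) / (2 * Real.sqrt (a + b*0 + c*0^2)))) 0 := by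
      have h := (((hqd 0).const_mul 4).mul ((hqd 0).sqrt (by rw [hQ0]; positivity)))
      convert h using 1
      · rfl
      · rfl
      · rfl
    have h := hN.div hD (by rw [hs0, hQ0]; positivity)
    convert h using 1
    · rfl
    · rfl
    · rfl
    rw [hs0, hQ0, hbr]
    have hc' : c = rdot^2 + r * rddot := by linarith [hcr]
    rw [hc']
    field_simp
    ring
  -- chain of eventual equalities
  have e1 : deriv d =ᶠ[nhds 0] f1 := by
    filter_upwards [hSmem] with t ht using (hd1 t ht).deriv
  have e2 : deriv f1 =ᶠ[nhds 0] f2 := by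
    filter_upwards [hSmem] with t ht using (hd2 t ht).deriv
  have E : deriv (deriv d) =ᶠ[nhds 0] f2 := e1.deriv.trans e2
  have final : deriv (deriv (deriv d)) 0 = deriv f2 0 := E.deriv.eq_of_nhds
  rw [show iteratedDeriv 3 d = deriv (deriv (deriv d)) by
    simp [iteratedDeriv_succ, iteratedDeriv_zero]]
  rw [final, hd3.deriv]
end

section
/- Let N ≥ 1 and P ≥ 1, let X, Y ∈ ℝ^{P×N} have columns x_1, …, x_N and y_1, …, y_N respectively, let M ∈ ℝ^{N×N} be the symmetric matrix with entries M_{ij} = ⟨x_i − x_j, y_i − y_j⟩, and let P_c = I_N − N⁻¹·𝟙𝟙ᵀ be the centering matrix. Then −P_c·M·P_c = P_c·(Xᵀ·Y + Yᵀ·X)·P_c. -/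
open Matrix

/-- Eqs. (25b)/(26b)/(27b): for `M_{ij} = ⟨xᵢ - xⱼ, yᵢ - yⱼ⟩` (i.e. `M = R ⊙ Ṙ`),
`-P_c M P_c = P_c (Xᵀ Y + Yᵀ X) P_c`. -/
theorem centered_mixed_kinematic_matrix
    (N P : ℕ) (hN : 1 ≤ N) (hP : 1 ≤ P)
    (X Y : Matrix (Fin P) (Fin N) ℝ)
    (M : Matrix (Fin N) (Fin N) ℝ)
    (hM : ∀ i j, M i j = ∑ p, (X p i - X p j) * (Y p i - Y p j))
    (Pc : Matrix (Fin N) (Fin N) ℝ)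
    (hPc : Pc = 1 - (N : ℝ)⁻¹ • Matrix.of (fun _ _ => (1 : ℝ))) :
    -(Pc * M * Pc) = Pc * (Xᵀ * Y + Yᵀ * X) * Pc := by
  have hN0 : (N : ℝ) ≠ 0 := Nat.cast_ne_zero.mpr (by omega)
  set c : Fin N → ℝ := fun i => ∑ p, X p i * Y p i with hc
  have hrow : ∀ k, ∑ i, Pc k i = 0 := by
    intro k
    subst hPc
    simp [Matrix.sub_apply, Matrix.one_apply, Finset.sum_sub_distrib,
      Finset.sum_ite_eq, Finset.card_fin]
    field_simp
    norm_num
  have hcol : ∀ l, ∑ j, Pc j l = 0 := by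
    intro l
    subst hPc
    simp [Matrix.sub_apply, Matrix.one_apply, Finset.sum_sub_distrib,
      Finset.sum_ite_eq', Finset.card_fin]
    field_simp
    norm_num
  have hB : ∀ i j, (M + (Xᵀ * Y + Yᵀ * X)) i j = c i + c j := by
    intro i j
    simp only [Matrix.add_apply, Matrix.mul_apply, Matrix.transpose_apply, hM, hc]
    rw [← Finset.sum_add_distrib, ← Finset.sum_add_distrib, ← Finset.sum_add_distrib]
    apply Finset.sum_congr rfl
    intro p _
    ring
  have key : Pc * (M + (Xᵀ * Y + Yᵀ * X)) * Pc = 0 := by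
    ext k l
    simp only [Matrix.mul_apply, Matrix.zero_apply]
    have h1 : ∀ j, (∑ i, Pc k i * (M + (Xᵀ * Y + Yᵀ * X)) i j)
        = ∑ i, Pc k i * c i := by
      intro j
      have : (∑ i, Pc k i * (M + (Xᵀ * Y + Yᵀ * X)) i j)
          = (∑ i, Pc k i * c i) + (∑ i, Pc k i) * c j := by
        rw [Finset.sum_mul, ← Finset.sum_add_distrib]
        apply Finset.sum_congr rfl
        intro i _
        rw [hB]; ring
      rw [this, hrow k, zero_mul, add_zero]
    calc ∑ j, (∑ i, Pc k i * (M + (Xᵀ * Y + Yᵀ * X)) i j) * Pc j l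
        = ∑ j, (∑ i, Pc k i * c i) * Pc j l := by
          apply Finset.sum_congr rfl; intro j _; rw [h1]
      _ = (∑ i, Pc k i * c i) * ∑ j, Pc j l := by rw [Finset.mul_sum]
      _ = 0 := by rw [hcol l, mul_zero]
  have expand : Pc * (M + (Xᵀ * Y + Yᵀ * X)) * Pc
      = Pc * M * Pc + Pc * (Xᵀ * Y + Yᵀ * X) * Pc := by
    rw [Matrix.mul_add, Matrix.add_mul]
  rw [expand] at key
  exact neg_eq_of_add_eq_zero_right key
end
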